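/- Let a, t be complex numbers with |t|^2 > 9|a| > 0. Then the cubic equation 3x^3 - 3tx^2 - 3ax + at = 0 has exactly one root x₀ with |x₀| > |a|^(1/2); the other two roots satisfy |x| < |a|^(1/2). -/

import Mathlib

open Polynomial

theorem cubic_roots_exist (a t : ℂ) : ∃ x y z : ℂ, x * y * z = -(a * t / 3) ∧
    (∀ w ∈ ({x, y, z} : Multiset ℂ), 3 * w ^ 3 - 3 * t * w ^ 2 - 3 * a * w + a * t = 0) := by
  have hqmonic : (X ^ 3 - C t * X ^ 2 - C a * X + C (a * t / 3)).Monic := by monicity!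
  have hqdeg : (X ^ 3 - C t * X ^ 2 - C a * X + C (a * t / 3)).natDegree = 3 := by
    compute_degree!
  have hsplits : (X ^ 3 - C t * X ^ 2 - C a * X + C (a * t / 3)).Splits :=
    IsAlgClosed.splits _
  have hcard : Multiset.card (X ^ 3 - C t * X ^ 2 - C a * X + C (a * t / 3)).roots = 3 := by
    rw [Polynomial.splits_iff_card_roots.mp hsplits, hqdeg]
  obtain ⟨x, y, z, hxyz⟩ := Multiset.card_eq_three.mp hcard
  refine ⟨x, y, z, ?_, ?_⟩
  · have hc0 : (X ^ 3 - C t * X ^ 2 - C a * X + C (a * t / 3)).coeff 0 = a * t / 3 := by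
      simp [coeff_X_pow]
    have h := hsplits.coeff_zero_eq_prod_roots_of_monic hqmonic
    rw [hc0, hqdeg, hxyz] at h
    have hprod : ({x, y, z} : Multiset ℂ).prod = x * y * z := by
      simp [Multiset.prod_cons]; ring
    rw [hprod] at h
    linear_combination h
  · intro w hw
    have hmem : w ∈ (X ^ 3 - C t * X ^ 2 - C a * X + C (a * t / 3)).roots := by
      rw [hxyz]; exact hw
    have hroot := (Polynomial.mem_roots hqmonic.ne_zero).mp hmem
    have heval : w ^ 3 - t * w ^ 2 - a * w + a * t / 3 = 0 := by
      simpa [Polynomial.IsRoot] using hroot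
    linear_combination 3 * heval

set_option maxHeartbeats 1600000 in
/-- Let `a, t` be complex numbers with `|t|^2 > 9|a| > 0`. Then the cubic equation
`3x^3 - 3tx^2 - 3ax + at = 0` has exactly one root `x₀` with `|x₀| > |a|^(1/2)`;
all the other roots satisfy `|x| < |a|^(1/2)`. -/
theorem cubic_one_large_root (a t : ℂ)
    (h1 : 9 * ‖a‖ < ‖t‖ ^ 2) (h2 : 0 < ‖a‖) :
    ∃ x₀ : ℂ,
      (3 * x₀ ^ 3 - 3 * t * x₀ ^ 2 - 3 * a * x₀ + a * t = 0 ∧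
        Real.sqrt (‖a‖) < ‖x₀‖) ∧
      ∀ x : ℂ, 3 * x ^ 3 - 3 * t * x ^ 2 - 3 * a * x + a * t = 0 → x ≠ x₀ →
        ‖x‖ < Real.sqrt (‖a‖) := by
  set A := ‖a‖ with hA
  set T := ‖t‖ with hT
  set r := Real.sqrt A with hr
  have hrpos : 0 < r := Real.sqrt_pos.2 h2
  have hr2 : r ^ 2 = A := Real.sq_sqrt h2.le
  have hTpos : 0 < T := by nlinarith [norm_nonneg t]
  have hTr : 3 * r < T := by nlinarith
  -- every root has modulus < r or > 4T/5
  have dich : ∀ x : ℂ, 3 * x ^ 3 - 3 * t * x ^ 2 - 3 * a * x + a * t = 0 →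
      ‖x‖ < r ∨ 4 * T / 5 < ‖x‖ := by
    intro x hx
    by_contra hcon
    push_neg at hcon
    obtain ⟨hge, hle⟩ := hcon
    set u := ‖x‖ with hu
    have hu0 : 0 ≤ u := norm_nonneg x
    have hAu : A ≤ u ^ 2 := by nlinarith
    have heq : (3 : ℂ) * x ^ 3 - 3 * a * x = t * (3 * x ^ 2 - a) := by
      linear_combination hx
    have habs : ‖3 * x ^ 3 - 3 * a * x‖ = T * ‖3 * x ^ 2 - a‖ := by
      rw [heq, norm_mul]
    have e1 : ‖3 * (x ^ 3 : ℂ)‖ = 3 * u ^ 3 := by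
      rw [norm_mul, norm_pow]; norm_num; rfl
    have e2 : ‖3 * a * x‖ = 3 * A * u := by
      rw [norm_mul, norm_mul]; norm_num; rfl
    have hLB : 3 * u ^ 2 - A ≤ ‖3 * x ^ 2 - a‖ := by
      have h3 : ‖3 * (x ^ 2 : ℂ)‖ = 3 * u ^ 2 := by
        rw [norm_mul, norm_pow]; norm_num; rfl
      have h' := norm_sub_norm_le (3 * x ^ 2) a
      rw [h3] at h'
      linarith
    have hUB : ‖3 * x ^ 3 - 3 * a * x‖ ≤ 3 * u ^ 3 + 3 * A * u := by
      have h' := norm_sub_le ((3:ℂ) * x ^ 3) (3 * a * x)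
      rw [e1, e2] at h'
      exact h'
    have key : T * (3 * u ^ 2 - A) ≤ 3 * u ^ 3 + 3 * A * u := by
      calc T * (3 * u ^ 2 - A) ≤ T * ‖3 * x ^ 2 - a‖ :=
            mul_le_mul_of_nonneg_left hLB hTpos.le
        _ = ‖3 * x ^ 3 - 3 * a * x‖ := habs.symm
        _ ≤ 3 * u ^ 3 + 3 * A * u := hUB
    rcases lt_or_ge u (T / 3) with hcase | hcase
    · nlinarith [mul_nonneg (sub_nonneg.2 hAu) (by linarith : (0:ℝ) ≤ T - u),
        mul_pos h2 (by linarith : (0:ℝ) < T - 3 * u)]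
    · have hint1 : 0 ≤ (3 * u - T) * (T ^ 2 + 6 * u * T - 9 * u ^ 2) := by
        apply mul_nonneg (by linarith)
        nlinarith
      have hint2 : 0 < (T ^ 2 - 9 * A) * (3 * u + T) := by
        apply mul_pos (by linarith) (by linarith)
      nlinarith [hint1, hint2, key]
  -- two roots of modulus > 4T/5 are impossible
  have two_large : ∀ x y : ℂ, 3 * x ^ 3 - 3 * t * x ^ 2 - 3 * a * x + a * t = 0 →
      3 * y ^ 3 - 3 * t * y ^ 2 - 3 * a * y + a * t = 0 → x ≠ y →
      4 * T / 5 < ‖x‖ → 4 * T / 5 < ‖y‖ → False := by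
    intro x y hx hy hxy hxbig hybig
    have hfac : (x - y) * ((x ^ 2 + x * y + y ^ 2) - t * (x + y) - a) = 0 := by
      linear_combination hx / 3 - hy / 3
    have hstar : x ^ 2 + x * y + y ^ 2 - t * (x + y) - a = 0 := by
      rcases mul_eq_zero.1 hfac with h | h
      · exact absurd h (sub_ne_zero.2 hxy)
      · linear_combination h
    have hdiam : 3 * (x * y) * (t - x - y) = -(a * t) := by
      linear_combination hx - 3 * x * hstar
    have hxyval : x * y = -a - (x + y) * (t - x - y) := by
      linear_combination -hstar
    set u := ‖x‖ with hu
    set v := ‖y‖ with hv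
    set w := ‖t - x - y‖ with hw
    set s := ‖x + y‖ with hs
    have hu0 : 0 ≤ u := norm_nonneg x
    have hv0 : 0 ≤ v := norm_nonneg y
    have hw0 : 0 ≤ w := norm_nonneg _
    have hs0 : 0 ≤ s := norm_nonneg _
    have habs1 : 3 * (u * v) * w = A * T := by
      have h' := congrArg (‖·‖) hdiam
      rw [norm_mul, norm_mul, norm_mul, norm_neg, norm_mul] at h'
      norm_num at h'
      rw [← hu, ← hv, ← hw, ← hA, ← hT] at h'
      linarith
    have habs2 : u * v ≤ A + s * w := by
      have h' := congrArg (‖·‖) hxyval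
      rw [norm_mul] at h'
      have h'' := norm_sub_le (-a) ((x + y) * (t - x - y))
      rw [norm_neg, norm_mul] at h''
      rw [h']
      exact h''
    have habs3 : s ≤ T + w := by
      have heqq : x + y = t - (t - x - y) := by ring
      have h'' := norm_sub_le t (t - x - y)
      rw [hs, heqq]
      exact h''
    have huv : 16 * T ^ 2 / 25 < u * v := by
      calc 16 * T ^ 2 / 25 = (4 * T / 5) * (4 * T / 5) := by ring
        _ < u * v := mul_lt_mul'' hxbig hybig (by positivity) (by positivity)
    have hwle : w * (48 * T ^ 2 / 25) ≤ A * T := by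
      have h' : 0 ≤ w * (u * v - 16 * T ^ 2 / 25) := mul_nonneg hw0 (by linarith)
      nlinarith [habs1]
    have hwT1 : 48 * (w * T) / 25 ≤ A := by
      have h' : (48 * (w * T) / 25) * T ≤ A * T := by nlinarith [hwle]
      exact le_of_mul_le_mul_right h' hTpos
    have hwT : w < T := by
      have h9 : 3 * A < T * T := by nlinarith
      nlinarith [hwT1, mul_pos hTpos hTpos]
    have hsw : s * w ≤ (T + w) * w := mul_le_mul_of_nonneg_right habs3 hw0
    have hww : w * w ≤ w * T := mul_le_mul_of_nonneg_left hwT.le hw0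
    nlinarith [hsw, hww, hwT1, habs2, huv, h1]
  obtain ⟨x, y, z, hprod, hroots⟩ := cubic_roots_exist a t
  have hax : ‖x‖ * ‖y‖ * ‖z‖ = A * T / 3 := by
    have h' := congrArg (‖·‖) hprod
    rw [norm_mul, norm_mul, norm_neg, norm_div, norm_mul] at h'
    norm_num at h'
    rw [← hA, ← hT] at h'
    linarith
  have hbig : r < ‖x‖ ∨ r < ‖y‖ ∨ r < ‖z‖ := by
    by_contra hcon
    push_neg at hcon
    obtain ⟨hc1, hc2, hc3⟩ := hcon
    have p1 : ‖x‖ * ‖y‖ ≤ r * r :=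
      mul_le_mul hc1 hc2 (norm_nonneg y) hrpos.le
    have p2 : ‖x‖ * ‖y‖ * ‖z‖ ≤ (r * r) * r :=
      mul_le_mul p1 hc3 (norm_nonneg z) (by positivity)
    have p3 : r * r * r = A * r := by rw [← hr2]; ring
    have p4 : 0 < A * (T - 3 * r) := mul_pos h2 (by linarith)
    rw [hax, p3] at p2
    nlinarith [p2, p4]
  have final : ∀ x₀ : ℂ, 3 * x₀ ^ 3 - 3 * t * x₀ ^ 2 - 3 * a * x₀ + a * t = 0 →
      r < ‖x₀‖ →
      ∃ x₀ : ℂ,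
      (3 * x₀ ^ 3 - 3 * t * x₀ ^ 2 - 3 * a * x₀ + a * t = 0 ∧
        r < ‖x₀‖) ∧
      ∀ x : ℂ, 3 * x ^ 3 - 3 * t * x ^ 2 - 3 * a * x + a * t = 0 → x ≠ x₀ →
        ‖x‖ < r := by
    intro x₀ heq hlt
    have hx₀big : 4 * T / 5 < ‖x₀‖ := by
      rcases dich x₀ heq with h | h
      · linarith
      · exact h
    refine ⟨x₀, ⟨heq, hlt⟩, ?_⟩
    intro x' hx' hne
    rcases dich x' hx' with h | h
    · exact h
    · exact absurd (two_large x' x₀ hx' heq hne h hx₀big) (by simp)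
  rcases hbig with h | h | h
  · exact final x (hroots x (by simp)) h
  · exact final y (hroots y (by simp)) h
  · exact final z (hroots z (by simp)) h
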